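/- Let γ : [0, L] → X be a curve parametrized by arclength in a metric space X. Then for almost every t₀ ∈ [0, L], |γ(t₀) γ(t₀ + ε)| = ε + o(ε) as ε → 0+, i.e., lim_{ε→0+} |γ(t₀) γ(t₀+ε)|/ε = 1 for almost all t₀. -/

import Mathlib

open Filter MeasureTheory Set intervalIntegral

lemma slope_tendsto_deriv {f : ℝ → ℝ} {b d : ℝ} (h : HasDerivAt f d b) :
    Tendsto (fun n : ℕ => (f (b + 1/(n+1 : ℝ)) - f b) / (1/(n+1 : ℝ)) ) atTop (nhds d) := by
  have hs := hasDerivAt_iff_tendsto_slope.1 h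
  have hc : Tendsto (fun n : ℕ => b + 1/(n+1 : ℝ)) atTop (nhdsWithin b {b}ᶜ) := by
    apply tendsto_nhdsWithin_of_tendsto_nhds_of_eventually_within
    · have : Tendsto (fun n : ℕ => 1/(n+1 : ℝ)) atTop (nhds 0) := tendsto_one_div_add_atTop_nhds_zero_nat
      simpa using (tendsto_const_nhds.add this)
    · filter_upwards with n
      have : (0:ℝ) < 1/(n+1 : ℝ) := by positivity
      simp only [mem_compl_iff, mem_singleton_iff]
      linarith
  have := hs.comp hc
  convert this using 2 with n
  simp [slope, div_eq_inv_mul]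

/-- FTC-type inequality for 1-Lipschitz functions. -/
lemma lipschitz_abs_sub_le_integral_abs_deriv {f : ℝ → ℝ} (hf : LipschitzWith 1 f)
    {a b : ℝ} (hab : a ≤ b) :
    |f b - f a| ≤ ∫ t in a..b, |deriv f t| := by
  have hcont : Continuous f := hf.continuous
  set c : ℕ → ℝ := fun n => 1/(n+1 : ℝ) with hc
  have hcpos : ∀ n, 0 < c n := fun n => by positivity
  set F : ℝ → ℝ := fun u => ∫ x in a..u, f x with hF
  have hFderiv : ∀ x : ℝ, HasDerivAt F (f x) x := fun x =>
    integral_hasDerivAt_right (hcont.intervalIntegrable _ _)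
      (hcont.stronglyMeasurableAtFilter _ _) hcont.continuousAt
  -- the quotient integrals
  set Q : ℕ → ℝ := fun n => (∫ t in a..b, (f (t + c n) - f t)) / c n with hQ
  have hQeq : ∀ n, Q n = ((F (b + c n) - F b) / c n) - ((F (a + c n) - F a) / c n) := by
    intro n
    have h1 : (∫ t in a..b, f (t + c n)) = ∫ t in (a + c n)..(b + c n), f t :=
      integral_comp_add_right f (c n)
    have h2 : (∫ t in a..b, (f (t + c n) - f t)) =
        (∫ t in a..b, f (t + c n)) - ∫ t in a..b, f t :=
      integral_sub ((hcont.comp (continuous_id.add continuous_const)).intervalIntegrable _ _)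
        (hcont.intervalIntegrable _ _)
    have h3 : (∫ t in (a + c n)..(b + c n), f t)
        = (F (b + c n)) - (F (a + c n)) := by
      rw [hF]
      rw [← integral_interval_sub_left (hcont.intervalIntegrable a (b + c n))
        (hcont.intervalIntegrable a (a + c n))]
    have h4 : (∫ t in a..b, f t) = F b - F a := by
      simp [hF]
    rw [hQ]; simp only [h2, h1, h3, h4]; ring
  have hQlim : Tendsto Q atTop (nhds (f b - f a)) := by
    have h1 := slope_tendsto_deriv (hFderiv b)
    have h2 := slope_tendsto_deriv (hFderiv a)
    have := h1.sub h2
    simpa only [← hQeq] using (Tendsto.congr (fun n => (hQeq n).symm) this)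
  have hae : ∀ᵐ t ∂(volume.restrict (Ioc a b)),
      Tendsto (fun n => |f (t + c n) - f t| / c n) atTop (nhds |deriv f t|) := by
    filter_upwards [ae_restrict_of_ae hf.ae_differentiableAt_of_real] with t ht
    have habs := (slope_tendsto_deriv ht.hasDerivAt).abs
    convert habs using 2 with n
    rw [abs_div, abs_of_pos (hcpos n)]
  have hmeas : ∀ n, AEStronglyMeasurable (fun t => |f (t + c n) - f t| / c n)
      (volume.restrict (Ioc a b)) := fun n =>
    (((hcont.comp (continuous_id.add continuous_const)).sub hcont).abs.div_const _).aestronglyMeasurable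
  have hbound : ∀ n, ∀ᵐ t ∂(volume.restrict (Ioc a b)),
      ‖|f (t + c n) - f t| / c n‖ ≤ (1:ℝ) := by
    intro n
    filter_upwards with t
    have h1 : |f (t + c n) - f t| ≤ c n := by
      have := hf.dist_le_mul (t + c n) t
      rw [Real.dist_eq, Real.dist_eq] at this
      simpa [abs_of_pos (hcpos n)] using this
    rw [Real.norm_eq_abs, abs_div, abs_of_pos (hcpos n), abs_abs, div_le_one (hcpos n)]
    exact h1
  have hint : Integrable (fun _ : ℝ => (1:ℝ)) (volume.restrict (Ioc a b)) := integrable_const 1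
  have hDCT := tendsto_integral_of_dominated_convergence _ hmeas hint hbound hae
  have hQle : ∀ n, |Q n| ≤ ∫ t in Ioc a b, |f (t + c n) - f t| / c n := by
    intro n
    calc |Q n| = |∫ t in a..b, (f (t + c n) - f t)| / c n := by
          rw [hQ, abs_div, abs_of_pos (hcpos n)]
      _ ≤ (∫ t in a..b, |f (t + c n) - f t|) / c n := by
          gcongr
          exact abs_integral_le_integral_abs hab
      _ = ∫ t in a..b, |f (t + c n) - f t| / c n := by rw [intervalIntegral.integral_div]
      _ = ∫ t in Ioc a b, |f (t + c n) - f t| / c n := integral_of_le hab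
  have final := le_of_tendsto_of_tendsto' hQlim.abs hDCT hQle
  calc |f b - f a| ≤ ∫ t in Ioc a b, |deriv f t| := final
    _ = ∫ t in a..b, |deriv f t| := (integral_of_le hab).symm


open scoped ENNReal

/-- if `γ : [0,L] → X` is parametrized by arclength, then for almost every
`t₀ ∈ [0,L]` one has `|γ(t₀) γ(t₀+ε)| = ε + o(ε)` as `ε → 0+`. -/
theorem arclength_param_infinitesimal_isometry {X : Type*} [MetricSpace X] (L : ℝ)
    (hL : 0 ≤ L) (γ : ℝ → X)
    (harc : ∀ s t : ℝ, 0 ≤ s → s ≤ t → t ≤ L →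
      eVariationOn γ (Set.Icc s t) = ENNReal.ofReal (t - s)) :
    ∀ᵐ t₀ ∂(volume.restrict (Set.Icc 0 L)),
      Tendsto (fun ε : ℝ => dist (γ t₀) (γ (t₀ + ε)) / ε) (nhdsWithin 0 (Set.Ioi 0))
        (nhds 1) := by
  classical
  -- γ is 1-Lipschitz on [0, L]
  have hlip : ∀ s t : ℝ, s ∈ Icc 0 L → t ∈ Icc 0 L → dist (γ s) (γ t) ≤ |s - t| := by
    have key : ∀ s t : ℝ, s ∈ Icc 0 L → t ∈ Icc 0 L → s ≤ t →
        dist (γ s) (γ t) ≤ |s - t| := by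
      intro s t hs ht hst
      have h1 : edist (γ s) (γ t) ≤ eVariationOn γ (Icc s t) :=
        eVariationOn.edist_le γ (left_mem_Icc.2 hst) (right_mem_Icc.2 hst)
      rw [harc s t hs.1 hst ht.2, edist_dist] at h1
      have h2 := (ENNReal.ofReal_le_ofReal_iff (by linarith)).1 h1
      rwa [abs_sub_comm, abs_of_nonneg (by linarith)]
    intro s t hs ht
    rcases le_total s t with h | h
    · exact key s t hs ht h
    · rw [dist_comm, abs_sub_comm]; exact key t s ht hs h
  -- the clamped curve
  set cl : ℝ → ℝ := fun t => max (min t L) 0 with hcl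
  have hcl_mem : ∀ t, cl t ∈ Icc 0 L := by
    intro t
    constructor
    · exact le_max_right _ _
    · exact max_le (min_le_right _ _) hL
  have hcl_id : ∀ t, t ∈ Icc 0 L → cl t = t := by
    intro t ht
    rw [hcl]
    simp only [min_eq_left ht.2, max_eq_left ht.1]
  have hcl_lip : LipschitzWith 1 cl := (LipschitzWith.id.min_const L).max_const 0
  set g : ℝ → X := fun t => γ (cl t) with hg
  have hg_lip : LipschitzWith 1 g := by
    apply LipschitzWith.of_dist_le_mul
    intro s t
    calc dist (g s) (g t) ≤ |cl s - cl t| := hlip _ _ (hcl_mem s) (hcl_mem t)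
      _ = dist (cl s) (cl t) := (Real.dist_eq _ _).symm
      _ ≤ 1 * dist s t := hcl_lip.dist_le_mul s t
  -- countable dense family in the image
  have hγcont : ContinuousOn γ (Icc 0 L) := by
    intro s hs
    apply Metric.continuousWithinAt_iff.2
    intro ε hε
    exact ⟨ε, hε, fun {t} ht hd => lt_of_le_of_lt (hlip t s ht hs)
      (by rwa [← Real.dist_eq])⟩
  have hKsep : TopologicalSpace.IsSeparable (γ '' Icc 0 L) :=
    (isCompact_Icc.image_of_continuousOn hγcont).isSeparable
  obtain ⟨c, hc_count, hc_sub⟩ := hKsep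
  have hc_ne : c.Nonempty := by
    by_contra h
    rw [not_nonempty_iff_eq_empty] at h
    have : γ 0 ∈ closure c := hc_sub ⟨0, left_mem_Icc.2 hL, rfl⟩
    rw [h] at this
    simp at this
  obtain ⟨x, hx_range⟩ := hc_count.exists_eq_range hc_ne
  have hx_dense : ∀ s : ℝ, s ∈ Icc 0 L → ∀ ε : ℝ, 0 < ε → ∃ n, dist (γ s) (x n) < ε := by
    intro s hs ε hε
    have h1 : γ s ∈ closure (range x) := by rw [← hx_range]; exact hc_sub ⟨s, hs, rfl⟩
    rw [Metric.mem_closure_iff] at h1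
    obtain ⟨y, hy, hyd⟩ := h1 ε hε
    obtain ⟨n, rfl⟩ := hy
    exact ⟨n, hyd⟩
  -- the distance functions
  set f : ℕ → ℝ → ℝ := fun n t => dist (x n) (g t) with hfdef
  have hf_lip : ∀ n, LipschitzWith 1 (f n) := by
    intro n
    have := (LipschitzWith.dist_right (x n)).comp hg_lip
    rw [mul_one] at this
    exact this
  have hf_deriv_le : ∀ n t, |deriv (f n) t| ≤ 1 := by
    intro n t
    by_cases h : DifferentiableAt ℝ (f n) t
    · have hs := hasDerivAt_iff_tendsto_slope.1 h.hasDerivAt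
      have hb : ∀ᶠ y in nhdsWithin t {t}ᶜ, |slope (f n) t y| ≤ 1 := by
        filter_upwards [self_mem_nhdsWithin] with y hy
        have hyt : y ≠ t := hy
        rw [slope_def_field, abs_div, div_le_one (abs_pos.2 (sub_ne_zero.2 hyt))]
        have h2 := (hf_lip n).dist_le_mul y t
        rw [Real.dist_eq, Real.dist_eq] at h2
        simpa using h2
      exact le_of_tendsto hs.abs hb
    · simp [deriv_zero_of_not_differentiableAt h]
  -- the supremal metric speed
  set M : ℝ → ℝ≥0∞ := fun t => ⨆ n, (‖deriv (f n) t‖₊ : ℝ≥0∞) with hMdef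
  have hM_meas : Measurable M :=
    Measurable.iSup fun n => (measurable_deriv (f n)).nnnorm.coe_nnreal_ennreal
  have hM_le : ∀ t, M t ≤ 1 := by
    intro t
    apply iSup_le
    intro n
    have := hf_deriv_le n t
    rw [← ENNReal.ofReal_one, ← enorm_eq_nnnorm, ← ofReal_norm, Real.norm_eq_abs]
    exact ENNReal.ofReal_le_ofReal this
  -- step (i): FTC bound for each f n
  have step1 : ∀ (n : ℕ) (a b : ℝ), a ≤ b →
      ENNReal.ofReal |f n b - f n a| ≤ ∫⁻ t in Ioc a b, M t := by
    intro n a b hab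
    have h1 : |f n b - f n a| ≤ ∫ t in Ioc a b, |deriv (f n) t| := by
      have := lipschitz_abs_sub_le_integral_abs_deriv (hf_lip n) hab
      rwa [intervalIntegral.integral_of_le hab] at this
    calc ENNReal.ofReal |f n b - f n a| ≤ ENNReal.ofReal (∫ t in Ioc a b, |deriv (f n) t|) :=
          ENNReal.ofReal_le_ofReal h1
      _ = ↑‖∫ t in Ioc a b, |deriv (f n) t|‖₊ := by
          rw [← enorm_eq_nnnorm, ← ofReal_norm, Real.norm_eq_abs,
            abs_of_nonneg (integral_nonneg fun t => abs_nonneg _)]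
      _ ≤ ∫⁻ t in Ioc a b, ↑‖|deriv (f n) t|‖₊ := enorm_integral_le_lintegral_enorm _
      _ ≤ ∫⁻ t in Ioc a b, M t := by
          apply lintegral_mono
          intro t
          simp only [Real.nnnorm_abs]
          exact le_iSup (fun m => (‖deriv (f m) t‖₊ : ℝ≥0∞)) n
  -- step (ii): distance bound
  have step2 : ∀ a b : ℝ, a ∈ Icc 0 L → b ∈ Icc 0 L → a ≤ b →
      ENNReal.ofReal (dist (γ a) (γ b)) ≤ ∫⁻ t in Ioc a b, M t := by
    intro a b ha hb hab
    have key : ∀ ε : ℝ, 0 < ε →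
        ENNReal.ofReal (dist (γ a) (γ b) - 2 * ε) ≤ ∫⁻ t in Ioc a b, M t := by
      intro ε hε
      obtain ⟨n, hn⟩ := hx_dense a ha ε hε
      have hfa : f n a = dist (x n) (γ a) := by rw [hfdef]; simp [hg, hcl_id a ha]
      have hfb : f n b = dist (x n) (γ b) := by rw [hfdef]; simp [hg, hcl_id b hb]
      have h1 : dist (γ a) (γ b) - 2 * ε ≤ |f n b - f n a| := by
        have h2 : dist (γ a) (γ b) ≤ dist (γ a) (x n) + dist (x n) (γ b) := dist_triangle _ _ _
        have h3 : dist (x n) (γ a) = dist (γ a) (x n) := dist_comm _ _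
        calc dist (γ a) (γ b) - 2 * ε ≤ f n b - f n a := by
              rw [hfa, hfb, h3]; linarith
          _ ≤ |f n b - f n a| := le_abs_self _
      exact le_trans (ENNReal.ofReal_le_ofReal h1) (step1 n a b hab)
    have htend : Tendsto (fun k : ℕ => ENNReal.ofReal (dist (γ a) (γ b) - 2 * (1 / (k + 1 : ℝ))))
        atTop (nhds (ENNReal.ofReal (dist (γ a) (γ b)))) := by
      apply ENNReal.tendsto_ofReal
      have h0 : Tendsto (fun k : ℕ => (1 : ℝ) / (k + 1 : ℝ)) atTop (nhds 0) :=
        tendsto_one_div_add_atTop_nhds_zero_nat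
      have := h0.const_mul (2 : ℝ)
      have h1 := (tendsto_const_nhds (x := dist (γ a) (γ b)) (f := atTop (α := ℕ))).sub this
      simpa using h1
    exact le_of_tendsto' htend fun k => key _ (by positivity)
  -- step (iii): total length bound
  have step3 : ENNReal.ofReal L ≤ ∫⁻ t in Ioc 0 L, M t := by
    have h0 : ENNReal.ofReal L = eVariationOn γ (Icc 0 L) := by
      rw [harc 0 L le_rfl hL le_rfl]; norm_num
    rw [h0, eVariationOn]
    apply iSup_le
    rintro ⟨N, u, hu_mono, hu_mem⟩
    have key : ∀ m : ℕ, (∑ i ∈ Finset.range m, edist (γ (u (i + 1))) (γ (u i))) ≤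
        ∫⁻ t in Ioc (u 0) (u m), M t := by
      intro m
      induction m with
      | zero => simp
      | succ m ih =>
        rw [Finset.sum_range_succ]
        have hum : u 0 ≤ u m := hu_mono (Nat.zero_le m)
        have hum1 : u m ≤ u (m + 1) := hu_mono (Nat.le_succ m)
        have hsplit : (∫⁻ t in Ioc (u 0) (u (m + 1)), M t) =
            (∫⁻ t in Ioc (u 0) (u m), M t) + ∫⁻ t in Ioc (u m) (u (m + 1)), M t := by
          rw [← Ioc_union_Ioc_eq_Ioc hum hum1,
            lintegral_union measurableSet_Ioc (Ioc_disjoint_Ioc_of_le le_rfl)]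
        rw [hsplit]
        apply add_le_add ih
        have := step2 (u m) (u (m + 1)) (hu_mem m) (hu_mem (m + 1)) hum1
        rwa [edist_dist, dist_comm]
    calc (∑ i ∈ Finset.range N, edist (γ (u (i + 1))) (γ (u i))) ≤
        ∫⁻ t in Ioc (u 0) (u N), M t := key N
      _ ≤ ∫⁻ t in Ioc 0 L, M t :=
        lintegral_mono_set (Ioc_subset_Ioc (hu_mem 0).1 (hu_mem N).2)
  -- step (iv): M = 1 a.e. on Ioc 0 L
  have hIle : (∫⁻ t in Ioc 0 L, M t) ≤ ENNReal.ofReal L := by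
    calc (∫⁻ t in Ioc 0 L, M t) ≤ ∫⁻ _ in Ioc 0 L, 1 := lintegral_mono fun t => hM_le t
      _ = volume (Ioc 0 L) := setLIntegral_one _
      _ = ENNReal.ofReal L := by rw [Real.volume_Ioc]; norm_num
  have hfin : (∫⁻ t in Ioc 0 L, M t) ≠ ⊤ := ne_top_of_le_ne_top ENNReal.ofReal_ne_top hIle
  have hsub : (∫⁻ t in Ioc 0 L, (1 - M t)) = 0 := by
    rw [lintegral_sub hM_meas hfin (Eventually.of_forall hM_le), setLIntegral_one,
      Real.volume_Ioc, tsub_eq_zero_iff_le]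
    simpa using step3
  have hae_M : ∀ᵐ t ∂(volume.restrict (Ioc 0 L)), 1 ≤ M t := by
    have h0 := (lintegral_eq_zero_iff (measurable_const.sub hM_meas)).1 hsub
    filter_upwards [h0] with t ht
    have ht' : (1 : ℝ≥0∞) - M t = 0 := ht
    rwa [tsub_eq_zero_iff_le] at ht'
  have hrestrict : volume.restrict (Icc 0 L) = volume.restrict (Ioc 0 L) :=
    (Measure.restrict_congr_set Ioc_ae_eq_Icc).symm
  have hae_M' : ∀ᵐ t ∂(volume.restrict (Icc 0 L)), 1 ≤ M t := by
    rw [hrestrict]; exact hae_M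
  have hdiff : ∀ᵐ t ∂(volume.restrict (Icc 0 L)), ∀ n, DifferentiableAt ℝ (f n) t :=
    ae_restrict_of_ae (ae_all_iff.2 fun n => (hf_lip n).ae_differentiableAt_of_real)
  have hmem : ∀ᵐ t ∂(volume.restrict (Icc 0 L)), t ∈ Icc 0 L :=
    ae_restrict_mem measurableSet_Icc
  have hneL : ∀ᵐ t ∂(volume.restrict (Icc 0 L)), t ≠ L := by
    have h0 : volume.restrict (Icc 0 L) {L} = 0 := by
      rw [Measure.restrict_apply (measurableSet_singleton L)]
      exact measure_mono_null inter_subset_left (measure_singleton L)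
    have hset : {a : ℝ | ¬ a ≠ L} = {L} := by ext a; simp
    rw [ae_iff, hset]
    exact h0
  -- final pointwise argument
  filter_upwards [hae_M', hdiff, hmem, hneL] with t hMt hdt htmem htne
  have htL : t < L := lt_of_le_of_ne htmem.2 htne
  rw [Metric.tendsto_nhds]
  intro δ hδ
  set δ' : ℝ := min (δ / 2) (1 / 2) with hδ'
  have hδ'pos : 0 < δ' := lt_min (by linarith) (by norm_num)
  have hδ'le : δ' ≤ 1 / 2 := min_le_right _ _
  have hδ'lt : δ' < δ := lt_of_le_of_lt (min_le_left _ _) (by linarith)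
  have h1δ' : 0 ≤ 1 - δ' := by linarith
  have hlt1 : ENNReal.ofReal (1 - δ') < 1 := by
    rw [← ENNReal.ofReal_one]
    exact (ENNReal.ofReal_lt_ofReal_iff_of_nonneg h1δ').2 (by linarith)
  obtain ⟨n, hn⟩ := lt_iSup_iff.1 (lt_of_lt_of_le hlt1 hMt)
  have hd : 1 - δ' < |deriv (f n) t| := by
    rw [← enorm_eq_nnnorm, ← ofReal_norm, Real.norm_eq_abs] at hn
    exact (ENNReal.ofReal_lt_ofReal_iff_of_nonneg h1δ').1 hn
  have hmap : Tendsto (fun ε : ℝ => t + ε) (nhdsWithin 0 (Ioi 0)) (nhdsWithin t {t}ᶜ) := by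
    apply tendsto_nhdsWithin_of_tendsto_nhds_of_eventually_within
    · have h1 : Tendsto (fun ε : ℝ => t + ε) (nhds 0) (nhds t) := by
        have h2 : Tendsto (fun ε : ℝ => t + ε) (nhds 0) (nhds (t + 0)) :=
          tendsto_const_nhds.add tendsto_id
        rwa [add_zero] at h2
      exact h1.mono_left nhdsWithin_le_nhds
    · filter_upwards [self_mem_nhdsWithin] with ε hε
      have : (0 : ℝ) < ε := hε
      simp only [mem_compl_iff, mem_singleton_iff]
      intro h
      nlinarith [h]
  have hslope : Tendsto (fun ε : ℝ => (f n (t + ε) - f n t) / ε) (nhdsWithin 0 (Ioi 0))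
      (nhds (deriv (f n) t)) := by
    have h0 := (hasDerivAt_iff_tendsto_slope.1 (hdt n).hasDerivAt).comp hmap
    refine Tendsto.congr (fun ε => ?_) h0
    simp only [Function.comp_apply, slope_def_field]
    rw [add_sub_cancel_left]
  have habs : Tendsto (fun ε : ℝ => |f n (t + ε) - f n t| / ε) (nhdsWithin 0 (Ioi 0))
      (nhds |deriv (f n) t|) := by
    refine Tendsto.congr' ?_ hslope.abs
    filter_upwards [self_mem_nhdsWithin] with ε hε
    rw [abs_div, abs_of_pos (show (0:ℝ) < ε from hε)]
  have hev1 := habs.eventually (eventually_gt_nhds hd)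
  have hev2 : Ioo (0 : ℝ) (L - t) ∈ nhdsWithin (0 : ℝ) (Ioi 0) :=
    Ioo_mem_nhdsGT_of_mem ⟨le_rfl, by linarith⟩
  filter_upwards [hev1, hev2] with ε hε1 hε2
  have hεpos : (0 : ℝ) < ε := hε2.1
  have hεL : t + ε ≤ L := by linarith [hε2.2]
  have ht1 : t ∈ Icc 0 L := htmem
  have ht2 : t + ε ∈ Icc 0 L := ⟨by linarith [htmem.1], hεL⟩
  have hub : dist (γ t) (γ (t + ε)) ≤ ε := by
    have h1 := hlip t (t + ε) ht1 ht2
    have h2 : |t - (t + ε)| = ε := by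
      rw [abs_sub_comm, add_sub_cancel_left, abs_of_pos hεpos]
    rwa [h2] at h1
  have hfa : f n t = dist (x n) (γ t) := by rw [hfdef]; simp [hg, hcl_id t ht1]
  have hfb : f n (t + ε) = dist (x n) (γ (t + ε)) := by rw [hfdef]; simp [hg, hcl_id _ ht2]
  have hlb0 : |f n (t + ε) - f n t| ≤ dist (γ t) (γ (t + ε)) := by
    rw [hfa, hfb, dist_comm (x n) (γ (t + ε)), dist_comm (x n) (γ t)]
    have h3 := abs_dist_sub_le (γ (t + ε)) (γ t) (x n)
    rwa [dist_comm (γ (t + ε)) (γ t)] at h3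
  have hlb : 1 - δ' < dist (γ t) (γ (t + ε)) / ε :=
    lt_of_lt_of_le hε1 ((div_le_div_iff_of_pos_right hεpos).2 hlb0)
  have hq1 : dist (γ t) (γ (t + ε)) / ε ≤ 1 := (div_le_one hεpos).2 hub
  rw [Real.dist_eq, abs_of_nonpos (by linarith)]
  linarith
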